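/- arXiv:2601.12724 — 3 statements merged into one kernel-verified Lean document; each statement's English description precedes it below -/
import Mathlib

section
/- Let V = [n] and s_{ia} ≥ 0. There exist jointly distributed random variables X_1, ..., X_n such that for all A ⊆ V, H((X_a)_{a∈A}) = ∑_{i∈V} max_{a∈A} s_{ia}; that is, the facility location function is entropic. -/
open Finset

/-- Shannon entropy of a random variable `X` on a finite probability space with pmf `p`. -/
noncomputable def entropy {Ω : Type} [Fintype Ω] {S : Type} (p : Ω → ℝ) (X : Ω → S) : ℝ := by
  classical
  exact ∑ s ∈ Finset.univ.image X,
    Real.negMulLog (∑ ω ∈ Finset.univ.filter (fun ω => X ω = s), p ω)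

/-- `p` is a probability mass function. -/
def IsPMF {Ω : Type} [Fintype Ω] (p : Ω → ℝ) : Prop :=
  (∀ ω, 0 ≤ p ω) ∧ ∑ ω, p ω = 1

/-- Mutual independence of a finite family of random variables. -/
def MutuallyIndep {Ω : Type} [Fintype Ω] {ι : Type} [Fintype ι] {S : Type}
    (p : Ω → ℝ) (Z : ι → Ω → S) : Prop := by
  classical
  exact ∀ s : ι → S,
    (∑ ω ∈ Finset.univ.filter (fun ω => ∀ u, Z u ω = s u), p ω) =
      ∏ u, ∑ ω ∈ Finset.univ.filter (fun ω => Z u ω = s u), p ω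

/-- A set function on `[n]` is entropic if it is the joint-entropy function of
jointly distributed discrete random variables. -/
def IsEntropic {n : ℕ} (f : Finset (Fin n) → ℝ) : Prop :=
  ∃ (N : ℕ) (S : Type) (p : Fin N → ℝ) (X : Fin n → Fin N → S),
    IsPMF p ∧ ∀ A : Finset (Fin n), f A = entropy p (fun ω => fun i : A => X i.1 ω)


/-- `max_{a ∈ A} (s a)`, with the convention that the max over `∅` is `0`. -/
noncomputable def flMax {n : ℕ} (s : Fin n → ℝ) (A : Finset (Fin n)) : ℝ :=
  (insert (0 : ℝ) (A.image s)).max' (Finset.insert_nonempty _ _)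


open Finset Real

set_option linter.unusedSectionVars false
variable {J T : Type} [Fintype J] [DecidableEq J] [Fintype T] [DecidableEq T]

lemma sum_pi_prod (v : J → T → ℝ) :
    ∑ g : J → T, ∏ j, v j (g j) = ∏ j, ∑ t, v j t := by
  rw [Finset.prod_univ_sum]
  rw [Fintype.piFinset_univ]

/-- Sublemma A: integrating out all coordinates except `j` against pmfs. -/
lemma sum_pi_weight (v : J → T → ℝ) (hv : ∀ j, ∑ t, v j t = 1) (j : J) (φ : T → ℝ) :
    ∑ g : J → T, (∏ j' ∈ ({j} : Finset J)ᶜ, v j' (g j')) * φ (g j) = ∑ t, φ t := by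
  have key : ∀ g : J → T,
      (∏ j' ∈ ({j} : Finset J)ᶜ, v j' (g j')) * φ (g j)
        = ∏ j', (fun j'' => if j'' = j then φ else v j'') j' (g j') := by
    intro g
    rw [← Finset.prod_compl_mul_prod ({j} : Finset J) (fun j' => (fun j'' => if j'' = j then φ else v j'') j' (g j'))]
    simp only [Finset.prod_singleton, if_pos rfl]
    congr 1
    apply Finset.prod_congr rfl
    intro j' hj'
    simp only [Finset.mem_compl, Finset.mem_singleton] at hj'
    simp [hj']
  simp only [key]
  rw [sum_pi_prod]
  rw [← Finset.prod_compl_mul_prod ({j} : Finset J) (fun j' => ∑ t, (fun j'' => if j'' = j then φ else v j'') j' t)]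
  simp only [Finset.prod_singleton, if_pos rfl]
  have : ∏ j' ∈ ({j} : Finset J)ᶜ, (∑ t, (fun j'' => if j'' = j then φ else v j'') j' t) = 1 := by
    apply Finset.prod_eq_one
    intro j' hj'
    simp only [Finset.mem_compl, Finset.mem_singleton] at hj'
    simp [hj', hv j']
  rw [this, one_mul]
  simp

/-- Lemma B: the key entropy identity for product measures. -/
lemma sum_negMulLog_prod (K : Finset J) :
    ∀ (r q : J → T → ℝ), (∀ j, ∑ t, r j t = 1) → (∀ j, ∑ t, q j t = 1) →
    ∑ g : J → T, (∏ j ∈ Kᶜ, r j (g j)) * Real.negMulLog (∏ k ∈ K, q k (g k))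
      = ∑ k ∈ K, ∑ t, Real.negMulLog (q k t) := by
  induction K using Finset.induction_on with
  | empty =>
    intro r q hr hq
    simp [Real.negMulLog_one]
  | @insert j K hj ih =>
    intro r q hr hq
    have hsplit : ∀ g : J → T,
        (∏ j' ∈ (insert j K)ᶜ, r j' (g j')) * Real.negMulLog (∏ k ∈ insert j K, q k (g k))
        = (∏ j' ∈ (insert j K)ᶜ, r j' (g j')) * (∏ k ∈ K, q k (g k)) * Real.negMulLog (q j (g j))
          + (∏ j' ∈ Kᶜ, (Function.update r j (q j)) j' (g j')) * Real.negMulLog (∏ k ∈ K, q k (g k)) := by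
      intro g
      rw [Finset.prod_insert hj, Real.negMulLog_mul]
      have hKc : ∏ j' ∈ Kᶜ, (Function.update r j (q j)) j' (g j')
          = q j (g j) * ∏ j' ∈ (insert j K)ᶜ, r j' (g j') := by
        rw [Finset.compl_insert]
        rw [← Finset.mul_prod_erase Kᶜ (fun j' => (Function.update r j (q j)) j' (g j'))
            (Finset.mem_compl.2 hj)]
        simp only [Function.update_self]
        congr 1
        apply Finset.prod_congr rfl
        intro j' hj'
        have : j' ≠ j := (Finset.mem_erase.1 hj').1
        simp [Function.update_of_ne this]
      rw [hKc]
      ring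
    simp only [hsplit]
    rw [Finset.sum_add_distrib]
    have h1 : ∑ g : J → T, (∏ j' ∈ (insert j K)ᶜ, r j' (g j')) * (∏ k ∈ K, q k (g k))
        * Real.negMulLog (q j (g j)) = ∑ t, Real.negMulLog (q j t) := by
      have hw : ∀ g : J → T, (∏ j' ∈ (insert j K)ᶜ, r j' (g j')) * (∏ k ∈ K, q k (g k))
          = ∏ j' ∈ ({j} : Finset J)ᶜ, (fun j'' => if j'' ∈ K then q j'' else r j'') j' (g j') := by
        intro g
        have hdisj : Disjoint ((insert j K)ᶜ) K :=
          Finset.disjoint_left.2 (fun {x} hx hxK => (Finset.mem_compl.1 hx) (Finset.mem_insert_of_mem hxK))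
        have hunion : (insert j K)ᶜ ∪ K = ({j} : Finset J)ᶜ := by
          ext x
          simp only [Finset.mem_union, Finset.mem_compl, Finset.mem_insert, Finset.mem_singleton]
          by_cases hxj : x = j
          · subst hxj; simp [hj]
          · simp only [hxj, false_or]; tauto
        rw [← hunion, Finset.prod_union hdisj]
        congr 1
        · apply Finset.prod_congr rfl
          intro j' hj'
          have : j' ∉ K := fun h => (Finset.mem_compl.1 hj') (Finset.mem_insert_of_mem h)
          simp [this]
        · apply Finset.prod_congr rfl
          intro j' hj'
          simp [hj']
      simp only [hw]
      have hpmf : ∀ j', ∑ t, (fun j'' => if j'' ∈ K then q j'' else r j'') j' t = 1 := by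
        intro j'
        by_cases h : j' ∈ K
        · simpa [h] using hq j'
        · simpa [h] using hr j'
      exact sum_pi_weight (fun j'' => if j'' ∈ K then q j'' else r j'') hpmf j
        (fun t => Real.negMulLog (q j t))
    have h2 : ∑ g : J → T, (∏ j' ∈ Kᶜ, (Function.update r j (q j)) j' (g j'))
        * Real.negMulLog (∏ k ∈ K, q k (g k)) = ∑ k ∈ K, ∑ t, Real.negMulLog (q k t) := by
      apply ih
      · intro j'
        by_cases h : j' = j
        · subst h; simp [hq j']
        · simp [Function.update_of_ne h, hr j']
      · exact hq
    rw [h1, h2, Finset.sum_insert hj]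

/-- Mass of a cylinder under a product pmf. -/
lemma mass_cylinder (q : J → T → ℝ) (hq1 : ∀ j, ∑ t, q j t = 1)
    (K : Finset J) (s : {x // x ∈ K} → T) :
    ∑ ω ∈ Finset.univ.filter (fun ω : J → T => ∀ k : {x // x ∈ K}, ω k.1 = s k),
        (∏ j, q j (ω j))
      = ∏ k : {x // x ∈ K}, q k.1 (s k) := by
  classical
  rw [Finset.sum_filter]
  have key : ∀ ω : J → T,
      (if (∀ k : {x // x ∈ K}, ω k.1 = s k) then ∏ j, q j (ω j) else 0)
        = ∏ j, (fun j' t => if h : j' ∈ K then (if t = s ⟨j', h⟩ then q j' t else 0) else q j' t) j (ω j) := by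
    intro ω
    by_cases hc : ∀ k : {x // x ∈ K}, ω k.1 = s k
    · rw [if_pos hc]
      apply Finset.prod_congr rfl
      intro j _
      by_cases h : j ∈ K
      · simp only [dif_pos h, if_pos (hc ⟨j, h⟩)]
      · simp only [dif_neg h]
    · rw [if_neg hc]
      push_neg at hc
      obtain ⟨k, hk⟩ := hc
      symm
      apply Finset.prod_eq_zero (Finset.mem_univ k.1)
      simp only [dif_pos k.2]
      rw [if_neg]
      intro hEq
      exact hk (by convert hEq using 2)
  simp only [key]
  have hval : ∀ j, (∑ t, (fun j' t => if h : j' ∈ K then (if t = s ⟨j', h⟩ then q j' t else 0) else q j' t) j t)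
      = if h : j ∈ K then q j (s ⟨j, h⟩) else 1 := by
    intro j
    by_cases h : j ∈ K
    · simp only [dif_pos h]
      rw [Finset.sum_ite_eq' Finset.univ (s ⟨j, h⟩) (q j)]
      simp
    · simp only [dif_neg h]
      exact hq1 j
  have hsp := sum_pi_prod (fun j' t => if h : j' ∈ K then (if t = s ⟨j', h⟩ then q j' t else 0) else q j' t)
  rw [hsp]
  simp only [hval]
  rw [← Finset.prod_subset (Finset.subset_univ K) (fun j _ hj => dif_neg hj)]
  rw [← Finset.prod_coe_sort K (fun j => if h : j ∈ K then q j (s ⟨j, h⟩) else 1)]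
  apply Finset.prod_congr rfl
  intro k _
  rw [dif_pos k.2, Subtype.coe_eta]

lemma entropy_def {Ω : Type} [Fintype Ω] {S : Type} [DecidableEq S] [DecidableEq Ω]
    (p : Ω → ℝ) (X : Ω → S) :
    entropy p X = ∑ s ∈ Finset.univ.image X,
      Real.negMulLog (∑ ω ∈ Finset.univ.filter (fun ω => X ω = s), p ω) := by
  unfold entropy
  congr!

lemma entropy_proj [Nonempty T] (q : J → T → ℝ) (hq1 : ∀ j, ∑ t, q j t = 1) (K : Finset J) :
    entropy (fun ω : J → T => ∏ j, q j (ω j)) (fun ω => fun k : {x // x ∈ K} => ω k.1)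
      = ∑ k ∈ K, ∑ t, Real.negMulLog (q k t) := by
  classical
  have hsurj : Function.Surjective (fun ω : J → T => fun k : {x // x ∈ K} => ω k.1) := by
    intro s
    refine ⟨fun j => if h : j ∈ K then s ⟨j, h⟩ else Classical.arbitrary T, ?_⟩
    funext k
    simp only [dif_pos k.2, Subtype.coe_eta]
  rw [entropy_def]
  rw [Finset.image_univ_of_surjective hsurj]
  have hmass : ∀ s : {x // x ∈ K} → T,
      (∑ ω ∈ Finset.univ.filter (fun ω : J → T => (fun k : {x // x ∈ K} => ω k.1) = s),
        ∏ j, q j (ω j)) = ∏ k : {x // x ∈ K}, q k.1 (s k) := by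
    intro s
    rw [← mass_cylinder q hq1 K s]
    apply Finset.sum_congr _ (fun _ _ => rfl)
    apply Finset.filter_congr
    intro ω _
    constructor
    · intro h k; exact congrFun h k
    · intro h; funext k; exact h k
  have step1 : ∑ s : {x // x ∈ K} → T,
      Real.negMulLog (∑ ω ∈ Finset.univ.filter (fun ω : J → T => (fun k : {x // x ∈ K} => ω k.1) = s),
        ∏ j, q j (ω j))
      = ∑ s : {x // x ∈ K} → T, Real.negMulLog (∏ k : {x // x ∈ K}, q k.1 (s k)) := by
    apply Finset.sum_congr rfl
    intro s _
    rw [hmass s]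
  rw [step1]
  -- counting argument
  set t := (Fintype.card T : ℝ) with ht
  have ht0 : (0:ℝ) < t := by
    rw [ht]
    exact_mod_cast Fintype.card_pos
  have hu : ∀ j : J, ∑ _x : T, t⁻¹ = 1 := by
    intro j
    rw [Finset.sum_const, Finset.card_univ, nsmul_eq_mul, ht, mul_inv_cancel₀ (ne_of_gt ht0)]
  have hB := sum_negMulLog_prod K (fun _ _ => t⁻¹) q (fun j => hu j) hq1
  have hconst : ∀ g : J → T, (∏ _j ∈ Kᶜ, t⁻¹ : ℝ) = t⁻¹ ^ (Kᶜ.card) := by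
    intro g
    rw [Finset.prod_const]
  rw [show (∑ g : J → T, (∏ _j ∈ Kᶜ, (t⁻¹:ℝ)) * Real.negMulLog (∏ k ∈ K, q k (g k)))
      = t⁻¹ ^ (Kᶜ.card) * ∑ g : J → T, Real.negMulLog (∏ k ∈ K, q k (g k)) by
    rw [Finset.mul_sum]
    apply Finset.sum_congr rfl
    intro g _
    rw [hconst g]] at hB
  -- reindex the sum over J → T
  have hcard : Fintype.card {x : J // x ∉ K} = Kᶜ.card := by
    rw [Fintype.card_subtype]
    congr 1
    ext x
    simp
  have hre : (∑ g : J → T, Real.negMulLog (∏ k ∈ K, q k (g k)))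
      = t ^ (Kᶜ.card) * ∑ s : {x // x ∈ K} → T,
          Real.negMulLog (∏ k : {x // x ∈ K}, q k.1 (s k)) := by
    rw [← Equiv.sum_comp (Equiv.piEquivPiSubtypeProd (fun j => j ∈ K) (fun _ => T)).symm
      (fun g : J → T => Real.negMulLog (∏ k ∈ K, q k (g k)))]
    rw [Fintype.sum_prod_type]
    have hval : ∀ (a : {x // x ∈ K} → T) (b : {x : J // ¬ x ∈ K} → T),
        Real.negMulLog (∏ k ∈ K,
            q k ((Equiv.piEquivPiSubtypeProd (fun j => j ∈ K) (fun _ => T)).symm (a, b) k))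
          = Real.negMulLog (∏ k : {x // x ∈ K}, q k.1 (a k)) := by
      intro a b
      congr 1
      rw [← Finset.prod_coe_sort K
        (fun k => q k ((Equiv.piEquivPiSubtypeProd (fun j => j ∈ K) (fun _ => T)).symm (a, b) k))]
      apply Finset.prod_congr rfl
      intro k _
      congr 1
      rw [Equiv.piEquivPiSubtypeProd_symm_apply]
      rw [dif_pos k.2, Subtype.coe_eta]
    simp only [hval]
    simp only [Finset.sum_const, Finset.card_univ, nsmul_eq_mul, Fintype.card_fun, hcard]
    rw [Finset.mul_sum]
    push_cast
    rfl
  rw [hre] at hB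
  rw [← hB, ← mul_assoc, ← mul_pow, inv_mul_cancel₀ (ne_of_gt ht0), one_pow, one_mul]

lemma entropy_fiber {Ω : Type} [Fintype Ω] {S : Type} (p : Ω → ℝ) (X : Ω → S) :
    entropy p X
      = entropy p (fun ω => by classical exact Finset.univ.filter (fun ω' => X ω' = X ω)) := by
  classical
  rw [entropy_def, entropy_def]
  apply Finset.sum_bij (fun (s : S) _ => Finset.univ.filter (fun ω' => X ω' = s))
  · intro s hs
    obtain ⟨ω₀, _, rfl⟩ := Finset.mem_image.1 hs
    exact Finset.mem_image_of_mem _ (Finset.mem_univ ω₀)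
  · intro s hs s' hs' hEq
    obtain ⟨ω₀, _, rfl⟩ := Finset.mem_image.1 hs
    have hω₀ : ω₀ ∈ Finset.univ.filter (fun ω' => X ω' = X ω₀) := by
      simp
    rw [hEq] at hω₀
    exact (Finset.mem_filter.1 hω₀).2
  · intro F hF
    obtain ⟨ω₀, _, rfl⟩ := Finset.mem_image.1 hF
    exact ⟨X ω₀, Finset.mem_image_of_mem _ (Finset.mem_univ ω₀), rfl⟩
  · intro s hs
    congr 2
    ext ω
    simp only [Finset.mem_filter, Finset.mem_univ, true_and]
    constructor
    · intro h
      rw [h]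
    · intro h
      have : ω ∈ Finset.univ.filter (fun ω' => X ω' = X ω) := by simp
      rw [h] at this
      exact (Finset.mem_filter.1 this).2

lemma entropy_congr {Ω : Type} [Fintype Ω] {S S' : Type} (p : Ω → ℝ)
    (X : Ω → S) (X' : Ω → S') (h : ∀ ω ω', X ω = X ω' ↔ X' ω = X' ω') :
    entropy p X = entropy p X' := by
  classical
  rw [entropy_fiber p X, entropy_fiber p X']
  congr 1
  funext ω
  ext ω'
  simp only [Finset.mem_filter, Finset.mem_univ, true_and]
  rw [h ω' ω]

lemma entropy_comp_equiv {Ω Ω' S : Type} [Fintype Ω] [Fintype Ω'] (e : Ω' ≃ Ω)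
    (p : Ω → ℝ) (X : Ω → S) :
    entropy (fun ν => p (e ν)) (fun ν => X (e ν)) = entropy p X := by
  classical
  rw [entropy_def, entropy_def]
  have himg : Finset.univ.image (fun ν => X (e ν)) = Finset.univ.image X := by
    rw [show (fun ν => X (e ν)) = X ∘ e from rfl, ← Finset.image_image,
      Finset.image_univ_of_surjective e.surjective]
  rw [himg]
  apply Finset.sum_congr rfl
  intro s _
  congr 1
  apply Finset.sum_bij (fun (ν : Ω') _ => e ν)
  · intro ν hν
    simp only [Finset.mem_filter, Finset.mem_univ, true_and] at hν ⊢
    exact hν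
  · intro ν _ ν' _ hEq
    exact e.injective hEq
  · intro ω hω
    refine ⟨e.symm ω, ?_, by simp⟩
    simp only [Finset.mem_filter, Finset.mem_univ, true_and, Equiv.apply_symm_apply] at hω ⊢
    exact hω
  · intro ν _
    rfl

lemma exists_pmf_entropy (m : ℕ) (hm : 0 < m) (d : ℝ) (hd0 : 0 ≤ d) (hdm : d ≤ Real.log m) :
    ∃ q : Fin m → ℝ, (∀ t, 0 ≤ q t) ∧ (∑ t, q t = 1) ∧ (∑ t, Real.negMulLog (q t) = d) := by
  have hm0 : (0:ℝ) < (m:ℝ) := by exact_mod_cast hm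
  set z : Fin m := ⟨0, hm⟩ with hz
  have hsplit : ∀ F G : ℝ, ∑ t : Fin m, (if t = z then F else G) = F + ((m:ℝ) - 1) * G := by
    intro F G
    rw [← Finset.add_sum_erase Finset.univ _ (Finset.mem_univ z), if_pos rfl]
    congr 1
    rw [Finset.sum_congr rfl (fun t ht => if_neg (Finset.mem_erase.1 ht).1), Finset.sum_const,
      Finset.card_erase_of_mem (Finset.mem_univ z), Finset.card_univ, Fintype.card_fin,
      nsmul_eq_mul, Nat.cast_sub (by omega : 1 ≤ m), Nat.cast_one]
  set a : ℝ → ℝ := fun θ => 1 - θ + θ / m with ha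
  set b : ℝ → ℝ := fun θ => θ / m with hb
  set g : ℝ → ℝ := fun θ => Real.negMulLog (a θ) + ((m:ℝ) - 1) * Real.negMulLog (b θ) with hg
  have hcont : Continuous g := by
    apply Continuous.add
    · exact Real.continuous_negMulLog.comp
        ((continuous_const.sub continuous_id).add (continuous_id.div_const _))
    · exact continuous_const.mul (Real.continuous_negMulLog.comp (continuous_id.div_const _))
  have hg0 : g 0 = 0 := by
    simp [hg, ha, hb, Real.negMulLog_one, Real.negMulLog_zero]
  have hg1 : g 1 = Real.log m := by
    have h1m : a 1 = 1 / m := by simp [ha]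
    have h2m : b 1 = 1 / m := by simp [hb]
    rw [hg]
    simp only [h1m, h2m]
    rw [Real.negMulLog, one_div, Real.log_inv]
    field_simp
    ring
  have hIVT := intermediate_value_Icc (by norm_num : (0:ℝ) ≤ 1) hcont.continuousOn
  have hd : d ∈ Set.Icc (g 0) (g 1) := by
    rw [hg0, hg1]; exact ⟨hd0, hdm⟩
  obtain ⟨θ, hθ, hgθ⟩ := hIVT hd
  obtain ⟨hθ0, hθ1⟩ := hθ
  refine ⟨fun t => if t = z then a θ else b θ, ?_, ?_, ?_⟩
  · intro t
    show (0:ℝ) ≤ if t = z then a θ else b θ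
    by_cases h : t = z
    · rw [if_pos h, ha]
      have : 0 ≤ θ / m := div_nonneg hθ0 hm0.le
      simp only
      linarith
    · rw [if_neg h, hb]
      exact div_nonneg hθ0 hm0.le
  · rw [hsplit, ha, hb]
    field_simp
    ring
  · have : ∀ t : Fin m, Real.negMulLog (if t = z then a θ else b θ)
        = if t = z then Real.negMulLog (a θ) else Real.negMulLog (b θ) := by
      intro t; by_cases h : t = z <;> simp [h]
    simp only [this]
    rw [hsplit]
    exact hgθ

lemma telescope_aux (W : Finset ℝ) (h0 : (0:ℝ) ∈ W) (hpos : ∀ w ∈ W, 0 ≤ w) :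
    ∀ (c : ℕ) (M : ℝ), M ∈ W → (W.filter (· ≤ M)).card ≤ c →
      ∑ w ∈ W.filter (· ≤ M),
        (w - (insert (0:ℝ) (W.filter (fun x => x < w))).max' (Finset.insert_nonempty _ _)) = M := by
  intro c
  induction c with
  | zero =>
    intro M hM hcard
    exfalso
    have : M ∈ W.filter (· ≤ M) := Finset.mem_filter.2 ⟨hM, le_refl M⟩
    have := Finset.card_pos.2 ⟨M, this⟩
    omega
  | succ c ih =>
    intro M hM hcard
    have hM0 : 0 ≤ M := hpos M hM
    have hprev0 : ∀ w ∈ W, w ≤ 0 →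
        (insert (0:ℝ) (W.filter (fun x => x < w))).max' (Finset.insert_nonempty _ _) = 0 := by
      intro w hw hw0
      have : W.filter (fun x => x < w) = ∅ := by
        apply Finset.filter_eq_empty_iff.2
        intro x hx
        have := hpos x hx
        push_neg
        linarith
      rw [this]
      simp
    rcases eq_or_lt_of_le hM0 with hM0' | hM0'
    · -- M = 0
      have hf : W.filter (· ≤ M) = {0} := by
        ext w
        simp only [Finset.mem_filter, Finset.mem_singleton]
        constructor
        · rintro ⟨hw, hwM⟩
          have := hpos w hw
          rw [← hM0'] at hwM
          linarith
        · rintro rfl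
          exact ⟨h0, by rw [← hM0']⟩
      rw [hf, Finset.sum_singleton, hprev0 0 h0 (le_refl 0), ← hM0']
      ring
    · -- 0 < M
      set P := (insert (0:ℝ) (W.filter (fun x => x < M))).max' (Finset.insert_nonempty _ _) with hP
      have hPM : P < M := by
        apply Finset.max'_lt_iff _ _ |>.2
        intro x hx
        rcases Finset.mem_insert.1 hx with rfl | hx'
        · exact hM0'
        · exact (Finset.mem_filter.1 hx').2
      have hPW : P ∈ W := by
        have := Finset.max'_mem (insert (0:ℝ) (W.filter (fun x => x < M))) (Finset.insert_nonempty _ _)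
        rw [← hP] at this
        rcases Finset.mem_insert.1 this with h | h
        · rw [h]; exact h0
        · exact (Finset.mem_filter.1 h).1
      have hle : ∀ w ∈ W, w < M → w ≤ P := by
        intro w hw hwM
        rw [hP]
        exact Finset.le_max' (insert (0:ℝ) (W.filter (fun x => x < M))) w
          (Finset.mem_insert_of_mem (Finset.mem_filter.2 ⟨hw, hwM⟩))
      have hsplit : W.filter (· ≤ M) = insert M (W.filter (· ≤ P)) := by
        ext w
        simp only [Finset.mem_filter, Finset.mem_insert]
        constructor
        · rintro ⟨hw, hwM⟩
          rcases eq_or_lt_of_le hwM with h | h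
          · exact Or.inl h
          · exact Or.inr ⟨hw, hle w hw h⟩
        · rintro (rfl | ⟨hw, hwP⟩)
          · exact ⟨hM, le_refl _⟩
          · exact ⟨hw, le_trans hwP hPM.le⟩
      have hMnot : M ∉ W.filter (· ≤ P) := by
        simp only [Finset.mem_filter]
        rintro ⟨_, h⟩
        linarith
      rw [hsplit, Finset.sum_insert hMnot]
      have hcard' : (W.filter (· ≤ P)).card ≤ c := by
        have : (insert M (W.filter (· ≤ P))).card = (W.filter (· ≤ P)).card + 1 :=
          Finset.card_insert_of_notMem hMnot
        rw [← hsplit] at this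
        omega
      rw [ih P hPW hcard']
      ring

lemma telescope (W : Finset ℝ) (h0 : (0:ℝ) ∈ W) (hpos : ∀ w ∈ W, 0 ≤ w) (M : ℝ) (hM : M ∈ W) :
    ∑ w ∈ W.filter (· ≤ M),
      (w - (insert (0:ℝ) (W.filter (fun x => x < w))).max' (Finset.insert_nonempty _ _)) = M :=
  telescope_aux W h0 hpos (W.filter (· ≤ M)).card M hM le_rfl

lemma sum_minidx {n : ℕ} (f : Fin n → ℝ) (F : ℝ → ℝ) (M : ℝ) :
    ∑ b ∈ Finset.univ.filter (fun b => f b ≤ M),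
        (if ∀ b' < b, f b' ≠ f b then F (f b) else 0)
      = ∑ w ∈ (Finset.univ.image f).filter (· ≤ M), F w := by
  classical
  rw [← Finset.sum_filter]
  have hinj : ∀ x ∈ (Finset.univ.filter (fun b => f b ≤ M)).filter (fun b => ∀ b' < b, f b' ≠ f b),
      ∀ y ∈ (Finset.univ.filter (fun b => f b ≤ M)).filter (fun b => ∀ b' < b, f b' ≠ f b),
      f x = f y → x = y := by
    intro x hx y hy hxy
    have hxm := (Finset.mem_filter.1 hx).2
    have hym := (Finset.mem_filter.1 hy).2
    rcases lt_trichotomy x y with h | h | h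
    · exact absurd hxy (hym x h)
    · exact h
    · exact absurd hxy.symm (hxm y h)
  rw [← Finset.sum_image hinj]
  congr 1
  ext w
  simp only [Finset.mem_image, Finset.mem_filter, Finset.mem_univ, true_and]
  constructor
  · rintro ⟨b, ⟨⟨hbM, _⟩, rfl⟩⟩
    exact ⟨⟨b, rfl⟩, hbM⟩
  · rintro ⟨⟨b₀, rfl⟩, hwM⟩
    have hne : (Finset.univ.filter (fun b => f b = f b₀)).Nonempty :=
      ⟨b₀, Finset.mem_filter.2 ⟨Finset.mem_univ _, rfl⟩⟩
    set b₁ := (Finset.univ.filter (fun b => f b = f b₀)).min' hne with hb₁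
    have hfb₁ : f b₁ = f b₀ :=
      (Finset.mem_filter.1 ((Finset.univ.filter (fun b => f b = f b₀)).min'_mem hne)).2
    refine ⟨b₁, ⟨⟨by rw [hfb₁]; exact hwM, ?_⟩, hfb₁⟩⟩
    intro b' hb' hEq
    have : b₁ ≤ b' := Finset.min'_le _ b' (Finset.mem_filter.2 ⟨Finset.mem_univ _, by rw [hEq, hfb₁]⟩)
    exact absurd hb' (not_lt.2 this)

lemma sum_d_eq {n : ℕ} (f : Fin n → ℝ) (hf : ∀ b, 0 ≤ f b) (M : ℝ)
    (hM : M ∈ insert (0:ℝ) (Finset.univ.image f)) :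
    ∑ b ∈ Finset.univ.filter (fun b => f b ≤ M),
      (if ∀ b' < b, f b' ≠ f b then
        f b - (insert (0:ℝ) ((insert (0:ℝ) (Finset.univ.image f)).filter (fun x => x < f b))).max'
          (Finset.insert_nonempty _ _)
       else 0) = M := by
  classical
  have hWpos : ∀ x ∈ insert (0:ℝ) (Finset.univ.image f), 0 ≤ x := by
    intro x hx
    rcases Finset.mem_insert.1 hx with rfl | hx'
    · exact le_refl 0
    · obtain ⟨b, _, rfl⟩ := Finset.mem_image.1 hx'
      exact hf b
  have key := sum_minidx f (fun w => w -
    (insert (0:ℝ) ((insert (0:ℝ) (Finset.univ.image f)).filter (fun x => x < w))).max'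
      (Finset.insert_nonempty _ _)) M
  rw [key]
  have hsub : (Finset.univ.image f).filter (· ≤ M)
      ⊆ (insert (0:ℝ) (Finset.univ.image f)).filter (· ≤ M) :=
    Finset.filter_subset_filter _ (Finset.subset_insert _ _)
  have hzero : ∀ x ∈ (insert (0:ℝ) (Finset.univ.image f)).filter (· ≤ M),
      x ∉ (Finset.univ.image f).filter (· ≤ M) →
      (x - (insert (0:ℝ) ((insert (0:ℝ) (Finset.univ.image f)).filter (fun y => y < x))).max'
        (Finset.insert_nonempty _ _)) = 0 := by
    intro x hx hnx
    obtain ⟨hxW, hxM⟩ := Finset.mem_filter.1 hx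
    rcases Finset.mem_insert.1 hxW with rfl | hx'
    · have hempty : (insert (0:ℝ) (Finset.univ.image f)).filter (fun y => y < (0:ℝ)) = ∅ := by
        apply Finset.filter_eq_empty_iff.2
        intro y hy
        push_neg
        exact hWpos y hy
      rw [hempty]
      simp
    · exact (hnx (Finset.mem_filter.2 ⟨hx', hxM⟩)).elim
  rw [Finset.sum_subset hsub hzero]
  exact telescope _ (Finset.mem_insert_self _ _) hWpos M hM

lemma flMax_empty {n : ℕ} (f : Fin n → ℝ) : flMax f ∅ = 0 := by
  unfold flMax
  simp

lemma le_flMax {n : ℕ} (f : Fin n → ℝ) (A : Finset (Fin n)) (a : Fin n) (ha : a ∈ A) :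
    f a ≤ flMax f A :=
  Finset.le_max' _ _ (Finset.mem_insert_of_mem (Finset.mem_image_of_mem f ha))

lemma flMax_attained {n : ℕ} (f : Fin n → ℝ) (hf : ∀ b, 0 ≤ f b) (A : Finset (Fin n))
    (hA : A.Nonempty) : ∃ a ∈ A, f a = flMax f A := by
  have hne : (A.image f).Nonempty := hA.image f
  obtain ⟨a, ha, hav⟩ := Finset.mem_image.1 ((A.image f).max'_mem hne)
  refine ⟨a, ha, ?_⟩
  unfold flMax
  rw [Finset.max'_insert 0 (A.image f) hne, hav]
  exact (sup_eq_right.2 (le_trans (hf a) (le_of_eq hav))).symm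

lemma flMax_mem {n : ℕ} (f : Fin n → ℝ) (A : Finset (Fin n)) :
    flMax f A ∈ insert (0:ℝ) (Finset.univ.image f) := by
  have := (insert (0:ℝ) (A.image f)).max'_mem (Finset.insert_nonempty _ _)
  rcases Finset.mem_insert.1 this with h | h
  · rw [flMax, h]; exact Finset.mem_insert_self _ _
  · obtain ⟨a, _, hav⟩ := Finset.mem_image.1 h
    rw [flMax, ← hav]
    exact Finset.mem_insert_of_mem (Finset.mem_image_of_mem f (Finset.mem_univ a))


/-- The facility location function `f(A) = ∑_i max_{a ∈ A} s i a` is entropic. -/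
theorem facility_location_is_entropic {n : ℕ}
    (s : Fin n → Fin n → ℝ) (hs : ∀ i a, 0 ≤ s i a) :
    IsEntropic (fun A => ∑ i : Fin n, flMax (s i) A) := by
  classical
  -- the increment function
  set D : Fin n × Fin n → ℝ := fun j =>
    if ∀ b' < j.2, s j.1 b' ≠ s j.1 j.2 then
      s j.1 j.2 - (insert (0:ℝ) ((insert (0:ℝ) (Finset.univ.image (s j.1))).filter
        (fun x => x < s j.1 j.2))).max' (Finset.insert_nonempty _ _)
    else 0 with hDdef
  have hprev_nonneg : ∀ (i : Fin n) (w : ℝ),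
      0 ≤ (insert (0:ℝ) ((insert (0:ℝ) (Finset.univ.image (s i))).filter
        (fun x => x < w))).max' (Finset.insert_nonempty _ _) := by
    intro i w
    exact Finset.le_max' _ 0 (Finset.mem_insert_self _ _)
  have hprev_le : ∀ (i : Fin n) (w : ℝ), 0 ≤ w →
      (insert (0:ℝ) ((insert (0:ℝ) (Finset.univ.image (s i))).filter
        (fun x => x < w))).max' (Finset.insert_nonempty _ _) ≤ w := by
    intro i w hw
    apply Finset.max'_le
    intro y hy
    rcases Finset.mem_insert.1 hy with rfl | hy'
    · exact hw
    · exact le_of_lt (Finset.mem_filter.1 hy').2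
  have hD0 : ∀ j, 0 ≤ D j := by
    intro j
    rw [hDdef]
    simp only
    split
    · have := hprev_le j.1 (s j.1 j.2) (hs j.1 j.2)
      linarith
    · exact le_refl 0
  have hDle : ∀ j, D j ≤ s j.1 j.2 := by
    intro j
    rw [hDdef]
    simp only
    split
    · have := hprev_nonneg j.1 (s j.1 j.2)
      linarith
    · exact hs j.1 j.2
  set C : ℝ := ∑ j : Fin n × Fin n, s j.1 j.2 with hC
  have hsC : ∀ j : Fin n × Fin n, s j.1 j.2 ≤ C :=
    fun j => Finset.single_le_sum (fun j' _ => hs j'.1 j'.2) (Finset.mem_univ j)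
  set m : ℕ := ⌈Real.exp C⌉₊ with hmdef
  have hm : 0 < m := Nat.ceil_pos.2 (Real.exp_pos C)
  have hlog : ∀ j, D j ≤ Real.log m := by
    intro j
    have h1 : Real.exp C ≤ (m : ℝ) := Nat.le_ceil _
    have h2 := Real.log_le_log (Real.exp_pos C) h1
    rw [Real.log_exp] at h2
    exact le_trans (le_trans (hDle j) (hsC j)) h2
  choose q hq0 hq1 hqH using fun j : Fin n × Fin n =>
    exists_pmf_entropy m hm (D j) (hD0 j) (hlog j)
  haveI : Nonempty (Fin m) := ⟨⟨0, hm⟩⟩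
  set e : Fin (Fintype.card (Fin n × Fin n → Fin m)) ≃ (Fin n × Fin n → Fin m) :=
    (Fintype.equivFin (Fin n × Fin n → Fin m)).symm with he
  refine ⟨Fintype.card (Fin n × Fin n → Fin m), (Fin n × Fin n) → Option (Fin m),
    fun ν => ∏ j, q j (e ν j),
    fun a ν => fun j => if s j.1 j.2 ≤ s j.1 a then some (e ν j) else none,
    ⟨fun ν => Finset.prod_nonneg (fun j _ => hq0 j _), ?_⟩, ?_⟩
  · -- sums to one
    have := Equiv.sum_comp e (fun ω : Fin n × Fin n → Fin m => ∏ j, q j (ω j))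
    rw [this, sum_pi_prod q]
    exact Finset.prod_eq_one (fun j _ => hq1 j)
  · intro A
    show ∑ i : Fin n, flMax (s i) A = _
    set K : Finset (Fin n × Fin n) :=
      Finset.univ.filter (fun j => ∃ a ∈ A, s j.1 j.2 ≤ s j.1 a) with hK
    -- step 1 : transport along e
    have h1 : entropy (fun ν => ∏ j, q j (e ν j))
        (fun ν => fun a : A => fun j : Fin n × Fin n =>
          if s j.1 j.2 ≤ s j.1 a.1 then some (e ν j) else none)
        = entropy (fun ω : Fin n × Fin n → Fin m => ∏ j, q j (ω j))
          (fun ω => fun a : A => fun j : Fin n × Fin n =>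
            if s j.1 j.2 ≤ s j.1 a.1 then some (ω j) else none) :=
      entropy_comp_equiv e (fun ω : Fin n × Fin n → Fin m => ∏ j, q j (ω j))
        (fun ω => fun a : A => fun j : Fin n × Fin n =>
          if s j.1 j.2 ≤ s j.1 a.1 then some (ω j) else none)
    -- step 2 : partition congruence
    have h2 : entropy (fun ω : Fin n × Fin n → Fin m => ∏ j, q j (ω j))
        (fun ω => fun a : A => fun j : Fin n × Fin n =>
          if s j.1 j.2 ≤ s j.1 a.1 then some (ω j) else none)
        = entropy (fun ω : Fin n × Fin n → Fin m => ∏ j, q j (ω j))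
          (fun ω => fun k : {x // x ∈ K} => ω k.1) := by
      apply entropy_congr
      intro ω ω'
      constructor
      · intro hY
        funext k
        obtain ⟨a, ha, hle⟩ := Finset.mem_filter.1 k.2 |>.2
        have := congrFun (congrFun hY ⟨a, ha⟩) k.1
        rw [if_pos hle, if_pos hle] at this
        exact Option.some.inj this
      · intro hp
        funext a j
        by_cases hc : s j.1 j.2 ≤ s j.1 a.1
        · rw [if_pos hc, if_pos hc]
          have hj : j ∈ K := Finset.mem_filter.2 ⟨Finset.mem_univ _, ⟨a.1, a.2, hc⟩⟩
          exact congrArg some (congrFun hp ⟨j, hj⟩)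
        · rw [if_neg hc, if_neg hc]
    -- step 3 : entropy of the projection
    have h3 := entropy_proj q hq1 K
    rw [h1, h2, h3]
    -- step 4 : combinatorial identity
    have h4 : ∀ j ∈ K, ∑ t, Real.negMulLog (q j t) = D j := fun j _ => hqH j
    rw [Finset.sum_congr rfl h4, hK, Finset.sum_filter, Fintype.sum_prod_type]
    apply Finset.sum_congr rfl
    intro i _
    rcases A.eq_empty_or_nonempty with rfl | hA
    · simp [flMax_empty]
    · have hiff : ∀ b, (∃ a ∈ A, s i b ≤ s i a) ↔ s i b ≤ flMax (s i) A := by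
        intro b
        constructor
        · rintro ⟨a, ha, hle⟩
          exact le_trans hle (le_flMax (s i) A a ha)
        · intro hle
          obtain ⟨a, ha, hav⟩ := flMax_attained (s i) (hs i) A hA
          exact ⟨a, ha, by rw [hav]; exact hle⟩
      simp only [hiff]
      rw [← Finset.sum_filter]
      exact (sum_d_eq (s i) (hs i) (flMax (s i) A) (flMax_mem (s i) A)).symm
end

section
/- For λ ∈ [0, 1/2], the function F(A) = ∑_{i∈A}∑_{j∈V} s_{ij} − λ∑_{i∈A}∑_{j∈A} s_{ij} (with s symmetric, nonnegative, zero diagonal) is normalized, monotone nondecreasing, and submodular. -/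
open Finset

/-- indicator -/
private def chi {n : ℕ} (A : Finset (Fin n)) (i : Fin n) : ℝ := if i ∈ A then 1 else 0

private lemma chi_sum {n : ℕ} (A : Finset (Fin n)) (g : Fin n → ℝ) :
    ∑ i ∈ A, g i = ∑ i : Fin n, chi A i * g i := by
  simp [chi, ite_mul]

private lemma chi_mem {n : ℕ} {A : Finset (Fin n)} {i : Fin n} (h : i ∈ A) : chi A i = 1 := by
  simp [chi, h]

private lemma chi_not_mem {n : ℕ} {A : Finset (Fin n)} {i : Fin n} (h : i ∉ A) : chi A i = 0 := by
  simp [chi, h]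

/-- For `λ ∈ [0, 1/2]`, the monotone graph-cut function is normalized, monotone
nondecreasing, and submodular. -/
theorem monotone_graph_cut_polymatroid {n : ℕ}
    (s : Fin n → Fin n → ℝ) (hsym : ∀ i j, s i j = s j i)
    (hnn : ∀ i j, 0 ≤ s i j) (hdiag : ∀ i, s i i = 0)
    (lam : ℝ) (hlam0 : 0 ≤ lam) (hlam2 : lam ≤ 1 / 2)
    (F : Finset (Fin n) → ℝ)
    (hF : ∀ A, F A = (∑ i ∈ A, ∑ j : Fin n, s i j) - lam * ∑ i ∈ A, ∑ j ∈ A, s i j) :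
    F ∅ = 0 ∧ (∀ A B : Finset (Fin n), A ⊆ B → F A ≤ F B) ∧
      ∀ A B : Finset (Fin n), F (A ∪ B) + F (A ∩ B) ≤ F A + F B := by
  have key : ∀ A, F A =
      ∑ i : Fin n, ∑ j : Fin n, (chi A i - lam * (chi A i * chi A j)) * s i j := by
    intro A
    rw [hF A]
    have h1 : ∑ i ∈ A, ∑ j : Fin n, s i j = ∑ i : Fin n, ∑ j : Fin n, chi A i * s i j := by
      rw [chi_sum]
      exact Finset.sum_congr rfl fun i _ => by rw [Finset.mul_sum]
    have h2 : ∑ i ∈ A, ∑ j ∈ A, s i j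
        = ∑ i : Fin n, ∑ j : Fin n, chi A i * chi A j * s i j := by
      rw [chi_sum]
      refine Finset.sum_congr rfl fun i _ => ?_
      rw [chi_sum A (fun j => s i j), Finset.mul_sum]
      exact Finset.sum_congr rfl fun j _ => by ring
    rw [h1, h2, Finset.mul_sum, ← Finset.sum_sub_distrib]
    refine Finset.sum_congr rfl fun i _ => ?_
    rw [Finset.mul_sum, ← Finset.sum_sub_distrib]
    exact Finset.sum_congr rfl fun j _ => by ring
  refine ⟨by simp [hF], ?_, ?_⟩
  · -- monotone
    intro A B hAB
    have hT : F B - F A = ∑ i : Fin n, ∑ j : Fin n,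
        ((chi B i - lam * (chi B i * chi B j)) - (chi A i - lam * (chi A i * chi A j))) * s i j := by
      rw [key A, key B, ← Finset.sum_sub_distrib]
      refine Finset.sum_congr rfl fun i _ => ?_
      rw [← Finset.sum_sub_distrib]
      exact Finset.sum_congr rfl fun j _ => by ring
    set c : Fin n → Fin n → ℝ := fun i j =>
      (chi B i - lam * (chi B i * chi B j)) - (chi A i - lam * (chi A i * chi A j)) with hc
    have hswap : (∑ i : Fin n, ∑ j : Fin n, c i j * s i j)
        = ∑ i : Fin n, ∑ j : Fin n, c j i * s i j := by
      rw [Finset.sum_comm]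
      exact Finset.sum_congr rfl fun i _ => Finset.sum_congr rfl fun j _ => by rw [hsym]
    have h2 : 0 ≤ (F B - F A) + (F B - F A) := by
      rw [hT]
      nth_rewrite 2 [hswap]
      rw [← Finset.sum_add_distrib]
      refine Finset.sum_nonneg fun i _ => ?_
      rw [← Finset.sum_add_distrib]
      refine Finset.sum_nonneg fun j _ => ?_
      have : c i j * s i j + c j i * s i j = (c i j + c j i) * s i j := by ring
      rw [this]
      refine mul_nonneg ?_ (hnn i j)
      by_cases hiA : i ∈ A <;> by_cases hjA : j ∈ A <;>
        by_cases hiB : i ∈ B <;> by_cases hjB : j ∈ B <;>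
        first
        | exact absurd (hAB hiA) hiB
        | exact absurd (hAB hjA) hjB
        | (simp only [hc, chi, hiA, hjA, hiB, hjB, if_true, if_false, ite_true, ite_false,
            reduceIte] ; nlinarith)
    linarith
  · -- submodular
    intro A B
    have hD : (F (A ∪ B) + F (A ∩ B)) - (F A + F B) = ∑ i : Fin n, ∑ j : Fin n,
        (((chi (A ∪ B) i - lam * (chi (A ∪ B) i * chi (A ∪ B) j))
          + (chi (A ∩ B) i - lam * (chi (A ∩ B) i * chi (A ∩ B) j)))
         - ((chi A i - lam * (chi A i * chi A j))
          + (chi B i - lam * (chi B i * chi B j)))) * s i j := by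
      rw [key A, key B, key (A ∪ B), key (A ∩ B)]
      rw [← Finset.sum_add_distrib, ← Finset.sum_add_distrib, ← Finset.sum_sub_distrib]
      refine Finset.sum_congr rfl fun i _ => ?_
      rw [← Finset.sum_add_distrib, ← Finset.sum_add_distrib, ← Finset.sum_sub_distrib]
      exact Finset.sum_congr rfl fun j _ => by ring
    have h0 : 0 ≤ (F A + F B) - (F (A ∪ B) + F (A ∩ B)) := by
      rw [← neg_sub, hD, ← Finset.sum_neg_distrib]
      refine Finset.sum_nonneg fun i _ => ?_
      rw [← Finset.sum_neg_distrib]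
      refine Finset.sum_nonneg fun j _ => ?_
      rw [← neg_mul]
      refine mul_nonneg ?_ (hnn i j)
      by_cases hiA : i ∈ A <;> by_cases hjA : j ∈ A <;>
        by_cases hiB : i ∈ B <;> by_cases hjB : j ∈ B <;>
        simp only [chi, Finset.mem_union, Finset.mem_inter, hiA, hjA, hiB, hjB,
          true_or, or_true, false_or, or_false, true_and, and_true, false_and, and_false,
          not_false_iff, or_self, and_self, if_true, if_false, ite_true, ite_false,
          reduceIte] <;> nlinarith
    linarith
end

section
/- The saturated coverage function f_sat(A) = min(∑_{u ∈ ∪_{i∈A} U_i} w_u, κ), with nonnegative integer weights w_u and nonnegative integer κ, is entropic up to a constant factor log q: there exist random variables X_1, ..., X_n with H(X_A) = f_sat(A)·log q for all A. -/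
open Finset

/- ### Auxiliary lemmas -/

lemma entropy_congr_inst {Ω : Type} [Fintype Ω] {S : Type} [inst : DecidableEq S]
    (p : Ω → ℝ) (X : Ω → S) :
    entropy p X = ∑ s ∈ Finset.univ.image X,
      Real.negMulLog (∑ ω ∈ Finset.univ.filter (fun ω => X ω = s), p ω) := by
  unfold entropy
  congr!

/-- Entropy of a uniformly distributed source through a map with constant fiber sizes. -/
lemma entropy_uniform {N : ℕ} (hN : 0 < N) {S : Type} [DecidableEq S]
    (X : Fin N → S) (c : ℕ)
    (hc : ∀ s ∈ Finset.univ.image X, (Finset.univ.filter (fun ω => X ω = s)).card = c) :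
    entropy (fun _ => (N : ℝ)⁻¹) X = Real.log ((Finset.univ.image X).card) := by
  classical
  have hNpos : (0:ℝ) < N := by exact_mod_cast hN
  set I := (Finset.univ.image X) with hI
  have hIne : I.Nonempty := by
    refine ⟨X ⟨0, hN⟩, Finset.mem_image_of_mem X (Finset.mem_univ _)⟩
  have hcI : c * I.card = N := by
    have := Finset.card_eq_sum_card_fiberwise (f := X) (s := Finset.univ) (t := I)
      (fun x _ => Finset.mem_image_of_mem X (Finset.mem_univ _))
    rw [Finset.card_univ, Fintype.card_fin] at this
    rw [this, Finset.sum_congr rfl hc, Finset.sum_const, smul_eq_mul, mul_comm]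
  have hcpos : 0 < c := by
    rcases Nat.eq_zero_or_pos c with h | h
    · exfalso; rw [h, zero_mul] at hcI; omega
    · exact h
  have hIpos : 0 < I.card := Finset.card_pos.mpr hIne
  rw [entropy_congr_inst]
  have key : ∀ s ∈ I, (∑ ω ∈ Finset.univ.filter (fun ω => X ω = s), (N:ℝ)⁻¹) = (I.card : ℝ)⁻¹ := by
    intro s hs
    rw [Finset.sum_const, hc s hs, nsmul_eq_mul]
    have : (c : ℝ) * (I.card : ℝ) = N := by exact_mod_cast hcI
    field_simp
    nlinarith [this]
  rw [Finset.sum_congr rfl (fun s hs => by rw [key s hs]), Finset.sum_const, nsmul_eq_mul]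
  rw [Real.negMulLog, Real.log_inv]
  have hIc : (0:ℝ) < (I.card:ℝ) := by exact_mod_cast hIpos
  field_simp
  congr!

/-- Entropy of an additive map of a uniform random variable is the log of its image size. -/
lemma entropy_additive {N : ℕ} {D S' : Type} [Fintype D] [AddCommGroup D] [AddCommGroup S']
    [DecidableEq S'] [DecidableEq D]
    (e : Fin N ≃ D) (g : D → S') (hadd : ∀ x y, g (x + y) = g x + g y) :
    entropy (fun _ => (N : ℝ)⁻¹) (fun ω => g (e ω)) = Real.log ((Finset.univ.image g).card) := by
  classical
  set G := AddMonoidHom.mk' g hadd with hG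
  have hg : ∀ x, g x = G x := fun x => rfl
  have hN : 0 < N := by
    have := Fintype.card_congr e
    simp only [Fintype.card_fin] at this
    rw [this]; exact Fintype.card_pos
  have himg : Finset.univ.image (fun ω => g (e ω)) = Finset.univ.image g := by
    have : (fun ω => g (e ω)) = g ∘ e := rfl
    rw [this, ← Finset.image_image, Finset.image_univ_equiv]
  have hfib : ∀ s ∈ Finset.univ.image (fun ω => g (e ω)),
      (Finset.univ.filter (fun ω => g (e ω) = s)).card
        = (Finset.univ.filter (fun y => g y = 0)).card := by
    intro s hs
    rw [himg, Finset.mem_image] at hs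
    obtain ⟨y₀, -, hy₀⟩ := hs
    have step1 : (Finset.univ.filter (fun ω => g (e ω) = s)).card
        = (Finset.univ.filter (fun y => g y = s)).card := by
      apply Finset.card_bij' (fun ω _ => e ω) (fun y _ => e.symm y)
      · intro ω hω; simp_all
      · intro y hy; simp_all
      · intro ω _; simp
      · intro y _; simp
    rw [step1]
    apply Finset.card_bij' (fun y _ => y - y₀) (fun y _ => y + y₀)
    · intro y hy
      simp only [Finset.mem_filter, Finset.mem_univ, true_and] at *
      rw [hg, map_sub, ← hg, ← hg, hy, hy₀, sub_self]
    · intro y hy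
      simp only [Finset.mem_filter, Finset.mem_univ, true_and] at *
      rw [hg, map_add, ← hg, ← hg, hy, hy₀, zero_add]
    · intro y _; abel
    · intro y _; abel
  rw [entropy_uniform hN _ _ hfib, himg]

open Polynomial in
lemma coeff_sum_fin {K : Type} [Semiring K] {κ : ℕ} (y : Fin κ → K) (t : Fin κ) :
    (∑ s : Fin κ, C (y s) * X ^ (s : ℕ)).coeff t = y t := by
  rw [Polynomial.finset_sum_coeff]
  simp only [Polynomial.coeff_C_mul, Polynomial.coeff_X_pow]
  rw [Finset.sum_eq_single t] <;> simp +contextual [Fin.val_inj, eq_comm]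

lemma eval_fin {K : Type} [Semiring K] {κ : ℕ} (p : Polynomial K)
    (hp : p.degree < (κ : WithBot ℕ)) (x : K) :
    p.eval x = ∑ t : Fin κ, p.coeff t * x ^ (t : ℕ) := by
  by_cases h0 : p = 0
  · simp [h0]
  · rw [Polynomial.eval_eq_sum_range' ((Polynomial.natDegree_lt_iff_degree_lt h0).mpr hp),
      Fin.sum_univ_eq_sum_range (fun i => p.coeff i * x ^ i)]

open Polynomial in
/-- The image size of the Vandermonde-type linear map `y ↦ (∑ t, y t • (ι j)^t)_j`. -/
lemma image_card_vandermonde {K : Type} [Field K] [Fintype K] [DecidableEq K]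
    {J : Type} [Fintype J] [DecidableEq J] (ι : J → K) (hι : Function.Injective ι) (κ : ℕ) :
    (Finset.univ.image (fun y : Fin κ → K => fun j : J => ∑ t : Fin κ, y t * ι j ^ (t : ℕ))).card
      = Fintype.card K ^ min (Fintype.card J) κ := by
  classical
  rcases le_total (Fintype.card J) κ with hle | hle
  · -- surjective case
    rw [min_eq_left hle]
    have hsurj : Function.Surjective
        (fun y : Fin κ → K => fun j : J => ∑ t : Fin κ, y t * ι j ^ (t : ℕ)) := by
      intro v
      have hinjOn : Set.InjOn ι ↑(Finset.univ : Finset J) := fun a _ b _ h => hι h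
      set P := Lagrange.interpolate Finset.univ ι v with hP
      have hdeg : P.degree < (κ : WithBot ℕ) := by
        refine lt_of_lt_of_le (Lagrange.degree_interpolate_lt v hinjOn) ?_
        rw [Finset.card_univ]
        exact_mod_cast Nat.cast_le.mpr hle
      refine ⟨fun t => P.coeff t, ?_⟩
      funext j
      show (∑ t : Fin κ, P.coeff t * ι j ^ (t:ℕ)) = v j
      rw [show (∑ t : Fin κ, P.coeff t * ι j ^ (t:ℕ)) = P.eval (ι j) from
        (eval_fin P hdeg (ι j)).symm]
      exact Lagrange.eval_interpolate_at_node v hinjOn (Finset.mem_univ j)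
    rw [Finset.image_univ_of_surjective hsurj, Finset.card_univ, Fintype.card_fun]
  · -- injective case
    rw [min_eq_right hle]
    have hinj : Function.Injective
        (fun y : Fin κ → K => fun j : J => ∑ t : Fin κ, y t * ι j ^ (t : ℕ)) := by
      intro y y' hyy
      simp only at hyy
      have hP : (∑ t : Fin κ, C (y t - y' t) * X ^ (t : ℕ)) = 0 := by
        by_cases h0 : (∑ t : Fin κ, C (y t - y' t) * X ^ (t : ℕ)) = 0
        · exact h0
        · refine Polynomial.eq_zero_of_natDegree_lt_card_of_eval_eq_zero _ hι (fun j => ?_)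
            (lt_of_lt_of_le ((Polynomial.natDegree_lt_iff_degree_lt h0).mpr
              (Polynomial.degree_sum_fin_lt _)) hle)
          have h1 := congrFun hyy j
          simp only [Polynomial.eval_finset_sum, Polynomial.eval_mul, Polynomial.eval_C,
            Polynomial.eval_pow, Polynomial.eval_X]
          rw [Finset.sum_congr rfl (fun t _ => sub_mul (y t) (y' t) (ι j ^ (t:ℕ))),
            Finset.sum_sub_distrib, h1, sub_self]
      funext t
      have h2 := congrArg (fun P : Polynomial K => P.coeff t) hP
      simp only [coeff_sum_fin, Polynomial.coeff_zero] at h2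
      exact sub_eq_zero.mp h2
    rw [Finset.card_image_of_injective _ hinj, Finset.card_univ, Fintype.card_fun,
      Fintype.card_fin]

/-- The saturated coverage function `A ↦ min(∑_{u ∈ ∪_{i∈A} U_i} w_u, κ)` with
nonnegative integer weights is entropic up to the factor `log q` for a suitable
prime power `q`. -/
theorem saturated_coverage_is_entropic {n : ℕ} {U : Type} [Fintype U] [DecidableEq U]
    (w : U → ℕ) (Us : Fin n → Finset U) (κ : ℕ) :
    ∃ q : ℕ, IsPrimePow q ∧
      IsEntropic (fun A : Finset (Fin n) =>
        ((min (∑ u ∈ A.biUnion Us, w u) κ : ℕ) : ℝ) * Real.log q) := by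
  classical
  obtain ⟨q, hq, hqp⟩ := Nat.exists_infinite_primes (Fintype.card ((u : U) × Fin (w u)) + 1)
  haveI : Fact q.Prime := ⟨hqp⟩
  haveI : NeZero q := ⟨hqp.pos.ne'⟩
  refine ⟨q, hqp.isPrimePow, ?_⟩
  set K := ZMod q with hK
  have hcardK : Fintype.card K = q := ZMod.card q
  set ι : ((u : U) × Fin (w u)) → K :=
    fun j => ((Fintype.equivFin ((u : U) × Fin (w u)) j : ℕ) : K) with hιdef
  have hι : Function.Injective ι := by
    intro a b hab
    apply (Fintype.equivFin ((u : U) × Fin (w u))).injective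
    apply Fin.ext
    have ha : ((Fintype.equivFin ((u : U) × Fin (w u))) a : ℕ) < q :=
      lt_of_lt_of_le (Fin.is_lt _) (by omega)
    have hb : ((Fintype.equivFin ((u : U) × Fin (w u))) b : ℕ) < q :=
      lt_of_lt_of_le (Fin.is_lt _) (by omega)
    have h := congrArg ZMod.val hab
    rwa [ZMod.val_natCast_of_lt ha, ZMod.val_natCast_of_lt hb] at h
  set N := Fintype.card (Fin κ → K) with hNdef
  have hNpos : 0 < N := Fintype.card_pos
  set e : Fin N ≃ (Fin κ → K) := (Fintype.equivFin (Fin κ → K)).symm with he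
  refine ⟨N, (((u : U) × Fin (w u)) → K), fun _ => (N : ℝ)⁻¹,
    fun i ω => fun j => if j.1 ∈ Us i then ∑ t : Fin κ, e ω t * ι j ^ (t : ℕ) else 0,
    ⟨fun _ => by positivity, ?_⟩, ?_⟩
  · rw [Finset.sum_const, Finset.card_univ, Fintype.card_fin, nsmul_eq_mul]
    have h0 : (0:ℝ) < N := by exact_mod_cast hNpos
    field_simp
  · intro A
    set T := A.biUnion Us with hT
    set g : (Fin κ → K) → (A → ((u : U) × Fin (w u)) → K) :=
      fun y i j => if j.1 ∈ Us i.1 then ∑ t : Fin κ, y t * ι j ^ (t : ℕ) else 0 with hg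
    have hadd : ∀ x y, g (x + y) = g x + g y := by
      intro x y
      funext i j
      by_cases hj : j.1 ∈ Us i.1 <;>
        simp [hg, hj, add_mul, Finset.sum_add_distrib]
    have hE : entropy (fun _ : Fin N => (N : ℝ)⁻¹)
        (fun ω => fun i : A => (fun j : ((u : U) × Fin (w u)) =>
          if j.1 ∈ Us i.1 then ∑ t : Fin κ, e ω t * ι j ^ (t : ℕ) else 0))
        = Real.log ((Finset.univ.image g).card) := entropy_additive e g hadd
    rw [hE]
    -- compute the image cardinality
    set e2 : ({j : ((u : U) × Fin (w u)) // j.1 ∈ T} → K) → (A → ((u : U) × Fin (w u)) → K) :=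
      fun v i j => if hj : j.1 ∈ Us i.1 then
        v ⟨j, Finset.mem_biUnion.mpr ⟨i.1, i.2, hj⟩⟩ else 0 with he2def
    set h0 : (Fin κ → K) → ({j : ((u : U) × Fin (w u)) // j.1 ∈ T} → K) :=
      fun y j => ∑ t : Fin κ, y t * ι j.1 ^ (t : ℕ) with hh0
    have hcomp : g = e2 ∘ h0 := by
      funext y i j
      by_cases hj : j.1 ∈ Us i.1 <;> simp [hg, he2def, hh0, hj]
    have he2 : Function.Injective e2 := by
      intro v v' hvv
      funext j
      obtain ⟨i, hiA, hij⟩ := Finset.mem_biUnion.mp j.2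
      have h := congrFun (congrFun hvv ⟨i, hiA⟩) j.1
      simp only [he2def, dif_pos hij] at h
      exact h
    have hcardJA : Fintype.card {j : ((u : U) × Fin (w u)) // j.1 ∈ T} = ∑ u ∈ T, w u := by
      rw [Fintype.card_subtype]
      have hfil : Finset.univ.filter (fun j : ((u : U) × Fin (w u)) => j.1 ∈ T)
          = T.sigma (fun u => Finset.univ) := by
        ext ⟨u, k⟩
        simp [Finset.mem_sigma]
      rw [hfil, Finset.card_sigma]
      simp
    have himg : (Finset.univ.image g).card = q ^ min (∑ u ∈ T, w u) κ := by
      rw [hcomp, show (e2 ∘ h0) = fun y => e2 (h0 y) from rfl]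
      have : Finset.univ.image (fun y => e2 (h0 y)) = (Finset.univ.image h0).image e2 := by
        rw [Finset.image_image]; rfl
      rw [this, Finset.card_image_of_injective _ he2]
      have hι' : Function.Injective (fun j : {j : ((u : U) × Fin (w u)) // j.1 ∈ T} => ι j.1) :=
        fun a b hab => Subtype.ext (hι hab)
      have := image_card_vandermonde (fun j : {j : ((u : U) × Fin (w u)) // j.1 ∈ T} => ι j.1)
        hι' κ
      rw [hh0]
      rw [this, hcardK, hcardJA]
    rw [himg]
    have hqpos : (0:ℝ) < q := by exact_mod_cast hqp.pos
    rw [show ((q ^ min (∑ u ∈ T, w u) κ : ℕ) : ℝ) = (q:ℝ) ^ min (∑ u ∈ T, w u) κ by push_cast; ring,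
      Real.log_pow]
end
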